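/- Let n, m ≥ 1. If x ∈ ker ε_n ⊆ ℤ[𝒢_n] and y ∈ ker ε_m ⊆ ℤ[𝒢_m], then x·y ∈ ker ε_{n+m} ⊆ ℤ[𝒢_{n+m}], where · is the product induced by disjoint union. In other words, the kernels of the maps ε_n are closed under the multiplication induced by disjoint union of graphs. -/

import Mathlib

open SimpleGraph

/-- A finite simple graph, packaged with its (finite) vertex type. -/
structure FGraph : Type 1 where
  V : Type
  [finV : Finite V]
  graph : SimpleGraph V

attribute [instance] FGraph.finV

namespace FGraph

/-- Two finite graphs are isomorphic if there is a graph isomorphism between them. -/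
def IsIsoTo (G H : FGraph) : Prop := Nonempty (G.graph ≃g H.graph)

instance setoid : Setoid FGraph where
  r := IsIsoTo
  iseqv := ⟨fun G => ⟨RelIso.refl G.graph.Adj⟩, fun ⟨e⟩ => ⟨e.symm⟩, fun ⟨e⟩ ⟨f⟩ => ⟨e.trans f⟩⟩

end FGraph

/-- Isomorphism classes of finite simple graphs. -/
def GraphClass : Type 1 := Quotient FGraph.setoid

namespace FGraph

/-- The isomorphism class of a finite graph. -/
def cls (G : FGraph) : GraphClass := Quotient.mk _ G

/-- The number of edges of a finite graph. -/
noncomputable def edgeCount (G : FGraph) : ℕ := G.graph.edgeSet.ncard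

/-- The edge-deleted subgraph `G - e`: same vertices, with the edge `e` removed. -/
def deleteEdge (G : FGraph) (e : Sym2 G.V) : FGraph :=
  { V := G.V, graph := G.graph.deleteEdges {e} }

/-- The multiset of edge-deleted subgraphs of `G` (one for each edge), as graphs. -/
noncomputable def deckGraphs (G : FGraph) : Multiset FGraph :=
  (G.graph.edgeSet.toFinite.toFinset.val).map fun e => G.deleteEdge e

/-- The edge deck of `G` : the multiset of isomorphism classes of the edge-deleted
subgraphs `G - e`, one for each edge `e` of `G`. -/
noncomputable def edgeDeck (G : FGraph) : Multiset GraphClass :=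
  G.deckGraphs.map cls

lemma exists_of_mem_edgeDeck {G : FGraph} {c : GraphClass} (hc : c ∈ G.edgeDeck) :
    ∃ H : FGraph, H.cls = c ∧ H.edgeCount = G.edgeCount - 1 := by
  classical
  rw [edgeDeck, deckGraphs, Multiset.map_map] at hc
  obtain ⟨e, he, rfl⟩ := Multiset.mem_map.mp hc
  refine ⟨G.deleteEdge e, rfl, ?_⟩
  have he' : e ∈ G.graph.edgeSet := by
    simpa using (Set.Finite.mem_toFinset _).mp he
  simp only [edgeCount, deleteEdge, SimpleGraph.edgeSet_deleteEdges]
  exact Set.ncard_sdiff_singleton_of_mem he'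

/-- The disjoint union of two finite graphs. -/
def disjUnion (G H : FGraph) : FGraph :=
  { V := G.V ⊕ H.V, graph := G.graph ⊕g H.graph }

end FGraph

/-- `𝒢 n` is the set of isomorphism classes of graphs with exactly `n` edges. -/
def GClass (n : ℕ) : Type 1 :=
  {c : GraphClass // ∃ G : FGraph, G.cls = c ∧ G.edgeCount = n}

/-- Given a graph `G` with `n` edges, sum a function `f` over the edge deck of `G`,
regarded as a multiset of isomorphism classes of graphs with `n - 1` edges. -/
noncomputable def FGraph.edgeDeckSum (n : ℕ) (G : FGraph) (hG : G.edgeCount = n)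
    {β : Type*} [AddCommMonoid β] (f : GClass (n - 1) → β) : β :=
  (G.edgeDeck.attach.map fun c => f ⟨c.1, by
    obtain ⟨H, h1, h2⟩ := FGraph.exists_of_mem_edgeDeck c.2
    exact ⟨H, h1, by rw [h2, hG]⟩⟩).sum

/-- The subgroup of relations defining `K₀(Γ_{n,n-1})`: for every graph `G` with `n`
edges, `[G] = Σ_{C ∈ ED(G)} [C]`. -/
def K0Rel (n : ℕ) : AddSubgroup (FreeAbelianGroup (GClass n ⊕ GClass (n - 1))) :=
  AddSubgroup.closure
    {x | ∃ (G : FGraph) (hG : G.edgeCount = n),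
      x = FreeAbelianGroup.of (Sum.inl ⟨G.cls, G, rfl, hG⟩)
        - G.edgeDeckSum n hG (fun c => FreeAbelianGroup.of (Sum.inr c))}

/-- `K₀(Γ_{n,n-1})`: the free abelian group on `𝒢 n ⊔ 𝒢 (n-1)` modulo the edge-deck
relations. -/
abbrev K0Gamma (n : ℕ) : Type 1 :=
  FreeAbelianGroup (GClass n ⊕ GClass (n - 1)) ⧸ K0Rel n

/-- The map `ι_n : 𝒢 n → K₀(Γ_{n,n-1})` sending a class to its image in the quotient. -/
noncomputable def iotaCls (n : ℕ) (c : GClass n) : K0Gamma n :=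
  QuotientAddGroup.mk (FreeAbelianGroup.of (Sum.inl c))

/-- Generalized edge reconstruction fails for `n`-edge graphs with `k` pieces: there are
two distinct multisets of `k` isomorphism classes of graphs with exactly `n` edges whose
total edge decks agree. -/
def GERFails (n k : ℕ) : Prop :=
  ∃ M M' : Multiset FGraph,
    Multiset.card M = k ∧ Multiset.card M' = k ∧
    (∀ G ∈ M, G.edgeCount = n) ∧ (∀ G ∈ M', G.edgeCount = n) ∧
    M.map FGraph.cls ≠ M'.map FGraph.cls ∧
    (M.map FGraph.edgeDeck).sum = (M'.map FGraph.edgeDeck).sum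

/-- `kmin n` is the least `k ≥ 1` for which generalized edge reconstruction fails for
`n`-edge graphs. -/
noncomputable def kmin (n : ℕ) : ℕ := sInf {k | 1 ≤ k ∧ GERFails n k}

/-- The graph `2K₂`: four vertices, two disjoint edges. -/
def twoK2 : FGraph :=
  { V := Fin 4, graph := SimpleGraph.fromEdgeSet {s(0, 1), s(2, 3)} }

/-- The graph `P₃ ⊔ K₁`: a two-edge path together with an isolated vertex. -/
def p3K1 : FGraph :=
  { V := Fin 4, graph := SimpleGraph.fromEdgeSet {s(0, 1), s(1, 2)} }

/-- The graph `K₃ ⊔ K₁`: a triangle together with an isolated vertex. -/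
def k3K1 : FGraph :=
  { V := Fin 4, graph := SimpleGraph.fromEdgeSet {s(0, 1), s(1, 2), s(0, 2)} }

/-- The star `K_{1,3}`: a center vertex adjacent to three leaves. -/
def k13 : FGraph :=
  { V := Fin 4, graph := SimpleGraph.fromEdgeSet {s(0, 1), s(0, 2), s(0, 3)} }

/- ===== auxiliary material ===== -/
section Aux

open SimpleGraph

variable {α β : Type*} {G : SimpleGraph α} {H : SimpleGraph β}

lemma sum_edgeSet' : (G ⊕g H).edgeSet
    = Sym2.map Sum.inl '' G.edgeSet ∪ Sym2.map Sum.inr '' H.edgeSet := by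
  ext e
  induction e using Sym2.ind with
  | _ x y =>
    simp only [Set.mem_union, Set.mem_image, SimpleGraph.mem_edgeSet]
    constructor
    · intro h
      cases x <;> cases y <;> simp only [SimpleGraph.sum_adj] at h
      · exact Or.inl ⟨s(_, _), h, rfl⟩
      · exact Or.inr ⟨s(_, _), h, rfl⟩
    · rintro (⟨e', he', h⟩ | ⟨e', he', h⟩) <;>
        induction e' using Sym2.ind with | _ a b => ?_ <;>
        cases x <;> cases y <;>
        simp_all [Sym2.map_pair_eq, Sym2.eq_iff] <;>
        (rcases h with ⟨rfl, rfl⟩ | ⟨rfl, rfl⟩ <;> first | exact he' | exact he'.symm)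

lemma sum_deleteEdges_inl' (e : Sym2 α) :
    (G ⊕g H).deleteEdges {Sym2.map Sum.inl e} = (G.deleteEdges {e}) ⊕g H := by
  ext x y
  have hinj : Function.Injective (Sym2.map (Sum.inl : α → α ⊕ β)) :=
    Sym2.map.injective Sum.inl_injective
  induction e using Sym2.ind with
  | _ a b => cases x <;> cases y <;> simp [Sym2.map_pair_eq, hinj.eq_iff, Sym2.eq_iff]

lemma sum_deleteEdges_inr' (e : Sym2 β) :
    (G ⊕g H).deleteEdges {Sym2.map Sum.inr e} = G ⊕g (H.deleteEdges {e}) := by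
  ext x y
  have hinj : Function.Injective (Sym2.map (Sum.inr : β → α ⊕ β)) :=
    Sym2.map.injective Sum.inr_injective
  induction e using Sym2.ind with
  | _ a b => cases x <;> cases y <;> simp [Sym2.map_pair_eq, hinj.eq_iff, Sym2.eq_iff]

/-- Sum of graph isomorphisms. -/
def isoSumCongr {α β γ δ : Type*} {G : SimpleGraph α} {H : SimpleGraph β}
    {G' : SimpleGraph γ} {H' : SimpleGraph δ} (e : G ≃g G') (f : H ≃g H') :
    (G ⊕g H) ≃g (G' ⊕g H') :=
  ⟨Equiv.sumCongr e.toEquiv f.toEquiv, by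
    intro u v
    cases u <;> cases v <;> simp [e.map_rel_iff, f.map_rel_iff]⟩

namespace FGraph

lemma cls_eq_of_graph_eq {V : Type} [Finite V] {g₁ g₂ : SimpleGraph V} (h : g₁ = g₂) :
    FGraph.cls ⟨V, g₁⟩ = FGraph.cls ⟨V, g₂⟩ := by subst h; rfl

lemma cls_disjUnion_congr {G₁ G₂ H₁ H₂ : FGraph} (hG : G₁.cls = G₂.cls)
    (hH : H₁.cls = H₂.cls) : (G₁.disjUnion H₁).cls = (G₂.disjUnion H₂).cls := by
  obtain ⟨e⟩ := Quotient.exact hG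
  obtain ⟨f⟩ := Quotient.exact hH
  exact Quotient.sound ⟨isoSumCongr e f⟩

lemma edgeCount_disjUnion (G H : FGraph) :
    (G.disjUnion H).edgeCount = G.edgeCount + H.edgeCount := by
  have hil : Function.Injective (Sym2.map (Sum.inl : G.V → G.V ⊕ H.V)) :=
    Sym2.map.injective Sum.inl_injective
  have hir : Function.Injective (Sym2.map (Sum.inr : H.V → G.V ⊕ H.V)) :=
    Sym2.map.injective Sum.inr_injective
  have hdisj : Disjoint (Sym2.map Sum.inl '' G.graph.edgeSet)
      (Sym2.map (Sum.inr : H.V → G.V ⊕ H.V) '' H.graph.edgeSet) := by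
    rw [Set.disjoint_left]
    rintro e ⟨e₁, -, rfl⟩ ⟨e₂, -, h⟩
    induction e₁ using Sym2.ind with
    | _ a b =>
      induction e₂ using Sym2.ind with
      | _ c d => simp_all [Sym2.map_pair_eq, Sym2.eq_iff]
  rw [edgeCount, disjUnion] at *
  rw [show (FGraph.mk (V := G.V ⊕ H.V) (G.graph ⊕g H.graph)).graph = G.graph ⊕g H.graph from rfl,
    sum_edgeSet', Set.ncard_union_eq hdisj (Set.toFinite _) (Set.toFinite _),
    Set.ncard_image_of_injective _ hil, Set.ncard_image_of_injective _ hir]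
  rfl

lemma edgeDeck_disjUnion (G H : FGraph) :
    (G.disjUnion H).edgeDeck
      = G.deckGraphs.map (fun K => (K.disjUnion H).cls)
        + H.deckGraphs.map (fun K => (G.disjUnion K).cls) := by
  classical
  have hil : Function.Injective (Sym2.map (Sum.inl : G.V → G.V ⊕ H.V)) :=
    Sym2.map.injective Sum.inl_injective
  have hir : Function.Injective (Sym2.map (Sum.inr : H.V → G.V ⊕ H.V)) :=
    Sym2.map.injective Sum.inr_injective
  have hT : ((G.disjUnion H).graph.edgeSet.toFinite.toFinset.val : Multiset (Sym2 (G.V ⊕ H.V)))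
      = G.graph.edgeSet.toFinite.toFinset.val.map (Sym2.map Sum.inl)
        + H.graph.edgeSet.toFinite.toFinset.val.map (Sym2.map Sum.inr) := by
    have hnd : (G.graph.edgeSet.toFinite.toFinset.val.map (Sym2.map Sum.inl)
        + H.graph.edgeSet.toFinite.toFinset.val.map
          (Sym2.map (Sum.inr : H.V → G.V ⊕ H.V))).Nodup := by
      rw [Multiset.nodup_add]
      refine ⟨Multiset.Nodup.map hil (Finset.nodup _),
        Multiset.Nodup.map hir (Finset.nodup _), ?_⟩
      rw [Multiset.disjoint_left]
      rintro e he₁ he₂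
      obtain ⟨e₁, -, rfl⟩ := Multiset.mem_map.mp he₁
      obtain ⟨e₂, -, h⟩ := Multiset.mem_map.mp he₂
      induction e₁ using Sym2.ind with
      | _ a b =>
        induction e₂ using Sym2.ind with
        | _ c d => simp_all [Sym2.map_pair_eq, Sym2.eq_iff]
    refine Multiset.Nodup.ext (Finset.nodup _) hnd |>.mpr fun e => ?_
    rw [Multiset.mem_add, Multiset.mem_map, Multiset.mem_map]
    rw [show ((G.disjUnion H).graph.edgeSet.toFinite.toFinset.val)
        = (G.disjUnion H).graph.edgeSet.toFinite.toFinset.val from rfl]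
    erw [← Finset.mem_def, Set.Finite.mem_toFinset]
    erw [show (G.disjUnion H).graph = G.graph ⊕g H.graph from rfl, sum_edgeSet']
    simp only [Set.mem_union, Set.mem_image, ← Finset.mem_def, Set.Finite.mem_toFinset]
  rw [edgeDeck, deckGraphs, hT]
  erw [Multiset.map_add]
  rw [Multiset.map_add]
  congr 1
  · erw [Multiset.map_map, Multiset.map_map]
    rw [deckGraphs, Multiset.map_map]
    refine Multiset.map_congr rfl fun e _ => ?_
    show ((G.disjUnion H).deleteEdge (Sym2.map Sum.inl e)).cls
      = ((G.deleteEdge e).disjUnion H).cls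
    exact cls_eq_of_graph_eq (sum_deleteEdges_inl' e)
  · erw [Multiset.map_map, Multiset.map_map]
    rw [deckGraphs, Multiset.map_map]
    refine Multiset.map_congr rfl fun e _ => ?_
    show ((G.disjUnion H).deleteEdge (Sym2.map Sum.inr e)).cls
      = ((G.disjUnion (H.deleteEdge e))).cls
    exact cls_eq_of_graph_eq (sum_deleteEdges_inr' e)

lemma edgeCount_of_mem_deckGraphs {G K : FGraph} (h : K ∈ G.deckGraphs) :
    K.edgeCount = G.edgeCount - 1 := by
  classical
  rw [deckGraphs] at h
  obtain ⟨e, he, rfl⟩ := Multiset.mem_map.mp h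
  have he' : e ∈ G.graph.edgeSet := by
    simpa using (Set.Finite.mem_toFinset _).mp he
  simp only [edgeCount, deleteEdge, SimpleGraph.edgeSet_deleteEdges]
  exact Set.ncard_sdiff_singleton_of_mem he'

end FGraph

/-- A representative of a class in `GClass k`. -/
noncomputable def GClass.rep {k : ℕ} (c : GClass k) : FGraph := c.2.choose

lemma GClass.rep_cls {k : ℕ} (c : GClass k) : c.rep.cls = c.1 := c.2.choose_spec.1

lemma GClass.rep_count {k : ℕ} (c : GClass k) : c.rep.edgeCount = k := c.2.choose_spec.2

open Classical in
/-- Extension of `FreeAbelianGroup.of` to all of `GraphClass` (zero outside `𝒢 k`). -/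
noncomputable def clsOf (k : ℕ) (c : GraphClass) : FreeAbelianGroup (GClass k) :=
  if h : ∃ H : FGraph, H.cls = c ∧ H.edgeCount = k then FreeAbelianGroup.of ⟨c, h⟩ else 0

lemma clsOf_eq (k : ℕ) {c : GraphClass} (h : ∃ H : FGraph, H.cls = c ∧ H.edgeCount = k) :
    clsOf k c = FreeAbelianGroup.of ⟨c, h⟩ := by unfold clsOf; rw [dif_pos h]

lemma FGraph.edgeDeckSum_of (n : ℕ) (G : FGraph) (hG : G.edgeCount = n) :
    G.edgeDeckSum n hG FreeAbelianGroup.of = (G.edgeDeck.map (clsOf (n - 1))).sum := by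
  rw [FGraph.edgeDeckSum]
  congr 1
  conv_rhs => rw [← Multiset.attach_map_val G.edgeDeck, Multiset.map_map]
  refine Multiset.map_congr rfl fun c _ => ?_
  rw [Function.comp_apply, clsOf_eq]

end Aux


/-- the kernels of the maps `ε_n : ℤ[𝒢_n] → ℤ[𝒢_{n-1}]` (sending a
generator `[G]` to `Σ_{C ∈ ED(G)} [C]`) are closed under the multiplication induced
by disjoint union (determined on generators by `[G]·[G'] = [G ⊔ G']`). -/
theorem ker_epsilon_mul_ker_epsilon (n m : ℕ) (hn : 1 ≤ n) (hm : 1 ≤ m)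
    (εn : FreeAbelianGroup (GClass n) →+ FreeAbelianGroup (GClass (n - 1)))
    (εm : FreeAbelianGroup (GClass m) →+ FreeAbelianGroup (GClass (m - 1)))
    (εnm : FreeAbelianGroup (GClass (n + m)) →+ FreeAbelianGroup (GClass (n + m - 1)))
    (hεn : ∀ (G : FGraph) (hG : G.edgeCount = n),
      εn (FreeAbelianGroup.of ⟨G.cls, G, rfl, hG⟩) = G.edgeDeckSum n hG FreeAbelianGroup.of)
    (hεm : ∀ (G : FGraph) (hG : G.edgeCount = m),
      εm (FreeAbelianGroup.of ⟨G.cls, G, rfl, hG⟩) = G.edgeDeckSum m hG FreeAbelianGroup.of)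
    (hεnm : ∀ (G : FGraph) (hG : G.edgeCount = n + m),
      εnm (FreeAbelianGroup.of ⟨G.cls, G, rfl, hG⟩)
        = G.edgeDeckSum (n + m) hG FreeAbelianGroup.of)
    (μ : FreeAbelianGroup (GClass n) →+
          FreeAbelianGroup (GClass m) →+ FreeAbelianGroup (GClass (n + m)))
    (hμ : ∀ (c : GClass n) (d : GClass m) (G G' : FGraph),
      G.cls = c.1 → G'.cls = d.1 →
      ∃ h, μ (FreeAbelianGroup.of c) (FreeAbelianGroup.of d)
        = FreeAbelianGroup.of (⟨(G.disjUnion G').cls, h⟩ : GClass (n + m)))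
    (x : FreeAbelianGroup (GClass n)) (y : FreeAbelianGroup (GClass m))
    (hx : εn x = 0) (hy : εm y = 0) :
    εnm (μ x y) = 0 := by
  classical
  set A : FreeAbelianGroup (GClass (n - 1)) →+ FreeAbelianGroup (GClass m) →+
      FreeAbelianGroup (GClass (n + m - 1)) :=
    FreeAbelianGroup.lift fun c => FreeAbelianGroup.lift fun d =>
      clsOf (n + m - 1) ((c.rep.disjUnion d.rep).cls) with hA
  set B : FreeAbelianGroup (GClass n) →+ FreeAbelianGroup (GClass (m - 1)) →+
      FreeAbelianGroup (GClass (n + m - 1)) :=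
    FreeAbelianGroup.lift fun c => FreeAbelianGroup.lift fun d =>
      clsOf (n + m - 1) ((c.rep.disjUnion d.rep).cls) with hB
  have key : ∀ x y, εnm (μ x y) = A (εn x) y + B x (εm y) := by
    intro x y
    induction x using FreeAbelianGroup.induction_on with
    | zero => simp
    | add x x' ihx ihx' =>
      simp only [map_add, AddMonoidHom.add_apply, ihx, ihx']
      abel
    | neg x ihx =>
      simp only [map_neg, AddMonoidHom.neg_apply, ihx]
      abel
    | of c =>
      induction y using FreeAbelianGroup.induction_on with
      | zero => simp
      | add y y' ihy ihy' =>
        simp only [map_add, AddMonoidHom.add_apply, ihy, ihy']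
        abel
      | neg y ihy =>
        simp only [map_neg, AddMonoidHom.neg_apply, ihy]
        abel
      | of d =>
        obtain ⟨hcd, hμeq⟩ := hμ c d c.rep d.rep (GClass.rep_cls c) (GClass.rep_cls d)
        have hcnt : (c.rep.disjUnion d.rep).edgeCount = n + m := by
          rw [FGraph.edgeCount_disjUnion, GClass.rep_count c, GClass.rep_count d]
        have hc : (⟨c.rep.cls, c.rep, rfl, GClass.rep_count c⟩ : GClass n) = c :=
          Subtype.ext (GClass.rep_cls c)
        have hd : (⟨d.rep.cls, d.rep, rfl, GClass.rep_count d⟩ : GClass m) = d :=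
          Subtype.ext (GClass.rep_cls d)
        have hεc : εn (FreeAbelianGroup.of c) = (c.rep.edgeDeck.map (clsOf (n - 1))).sum := by
          conv_lhs => rw [← hc]
          rw [hεn c.rep (GClass.rep_count c), FGraph.edgeDeckSum_of]
        have hεd : εm (FreeAbelianGroup.of d) = (d.rep.edgeDeck.map (clsOf (m - 1))).sum := by
          conv_lhs => rw [← hd]
          rw [hεm d.rep (GClass.rep_count d), FGraph.edgeDeckSum_of]
        have hl : εnm (FreeAbelianGroup.of (⟨(c.rep.disjUnion d.rep).cls, hcd⟩ : GClass (n + m)))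
            = (c.rep.disjUnion d.rep).edgeDeckSum (n + m) hcnt FreeAbelianGroup.of :=
          hεnm _ hcnt
        have h1 : A (εn (FreeAbelianGroup.of c)) (FreeAbelianGroup.of d)
            = (c.rep.deckGraphs.map fun K =>
                clsOf (n + m - 1) ((K.disjUnion d.rep).cls)).sum := by
          rw [hεc, show A (c.rep.edgeDeck.map (clsOf (n - 1))).sum (FreeAbelianGroup.of d)
              = A.flip (FreeAbelianGroup.of d) (c.rep.edgeDeck.map (clsOf (n - 1))).sum from rfl,
            map_multiset_sum, Multiset.map_map, FGraph.edgeDeck, Multiset.map_map]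
          refine congrArg Multiset.sum (Multiset.map_congr rfl fun K hK => ?_)
          have hK1 : K.edgeCount = n - 1 := by
            rw [FGraph.edgeCount_of_mem_deckGraphs hK, GClass.rep_count c]
          have hex : ∃ H : FGraph, H.cls = K.cls ∧ H.edgeCount = n - 1 := ⟨K, rfl, hK1⟩
          show A.flip (FreeAbelianGroup.of d) (clsOf (n - 1) K.cls)
            = clsOf (n + m - 1) ((K.disjUnion d.rep).cls)
          rw [clsOf_eq _ hex, AddMonoidHom.flip_apply, hA]
          erw [FreeAbelianGroup.lift_apply_of, FreeAbelianGroup.lift_apply_of]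
          exact congrArg _ (FGraph.cls_disjUnion_congr (GClass.rep_cls ⟨K.cls, hex⟩) rfl)
        have h2 : B (FreeAbelianGroup.of c) (εm (FreeAbelianGroup.of d))
            = (d.rep.deckGraphs.map fun K =>
                clsOf (n + m - 1) ((c.rep.disjUnion K).cls)).sum := by
          rw [hεd, hB, FreeAbelianGroup.lift_apply_of, map_multiset_sum, Multiset.map_map,
            FGraph.edgeDeck, Multiset.map_map]
          refine congrArg Multiset.sum (Multiset.map_congr rfl fun K hK => ?_)
          have hK1 : K.edgeCount = m - 1 := by
            rw [FGraph.edgeCount_of_mem_deckGraphs hK, GClass.rep_count d]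
          have hex : ∃ H : FGraph, H.cls = K.cls ∧ H.edgeCount = m - 1 := ⟨K, rfl, hK1⟩
          show FreeAbelianGroup.lift (fun d' => clsOf (n + m - 1) ((c.rep.disjUnion d'.rep).cls))
              (clsOf (m - 1) K.cls) = clsOf (n + m - 1) ((c.rep.disjUnion K).cls)
          rw [clsOf_eq _ hex]
          erw [FreeAbelianGroup.lift_apply_of]
          exact congrArg _ (FGraph.cls_disjUnion_congr rfl (GClass.rep_cls ⟨K.cls, hex⟩))
        rw [hμeq]
        erw [hl]
        rw [h1, h2, FGraph.edgeDeckSum_of, FGraph.edgeDeck_disjUnion,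
          Multiset.map_add, Multiset.sum_add, Multiset.map_map, Multiset.map_map]
        rfl
  rw [key, hx, hy, map_zero, AddMonoidHom.zero_apply, map_zero, add_zero]
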